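/- If a matroid M on ground set E admits a partition of E into independent sets of sizes λ₁ ≥ λ₂ ≥ ... ≥ λₗ, and μ is a partition of |E| with μ ≤ λ in dominance order, then E also admits a partition into independent sets whose sizes are the parts of μ. -/

import Mathlib

open Finset

lemma aux_partition_dom {α : Type*} [Fintype α] [DecidableEq α] (M : Matroid α)
    (mu : ℕ → ℕ) (hmu : Antitone mu)
    (hmusum : ∑ i ∈ Finset.range (Fintype.card α), mu i = Fintype.card α)
    (hmu0 : ∀ i, Fintype.card α ≤ i → mu i = 0) :
    ∀ (D : ℕ) (lam : ℕ → ℕ),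
      (∀ k, ∑ i ∈ Finset.range k, mu i ≤ ∑ i ∈ Finset.range k, lam i) →
      (∑ k ∈ Finset.range (Fintype.card α),
          ((∑ i ∈ Finset.range k, lam i) - ∑ i ∈ Finset.range k, mu i)) ≤ D →
      (∃ π : α → ℕ,
        (∀ i, (Finset.univ.filter (fun x => π x = i)).card = lam i) ∧
        ∀ i, M.Indep ↑(Finset.univ.filter (fun x => π x = i))) →
      ∃ π : α → ℕ,
        (∀ i, (Finset.univ.filter (fun x => π x = i)).card = mu i) ∧
        ∀ i, M.Indep ↑(Finset.univ.filter (fun x => π x = i)) := by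
  intro D
  induction D with
  | zero =>
    intro lam hdom hmeas ⟨π, hcard, hind⟩
    set c := Fintype.card α with hc
    -- sum of any set of lam-values is at most c
    have fibersum : ∀ s : Finset ℕ, ∑ i ∈ s, lam i ≤ c := by
      intro s
      have hdisj : ∀ i ∈ s, ∀ j ∈ s, i ≠ j →
          Disjoint (Finset.univ.filter (fun x => π x = i))
            (Finset.univ.filter (fun x => π x = j)) := by
        intro i _ j _ hij
        rw [Finset.disjoint_left]
        intro x hx hx'
        simp only [Finset.mem_filter] at hx hx'
        exact hij (hx.2 ▸ hx'.2 ▸ rfl)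
      calc ∑ i ∈ s, lam i
          = ∑ i ∈ s, (Finset.univ.filter (fun x => π x = i)).card := by
            simp [hcard]
        _ = (s.biUnion (fun i => Finset.univ.filter (fun x => π x = i))).card :=
            (Finset.card_biUnion hdisj).symm
        _ ≤ (Finset.univ : Finset α).card := Finset.card_le_univ _
        _ = c := Finset.card_univ
    have hlamc : ∑ i ∈ Finset.range c, lam i = c := by
      have h1 := hdom c
      have h2 := fibersum (Finset.range c)
      omega
    have hlam0 : ∀ i, c ≤ i → lam i = 0 := by
      intro i hi
      have h1 := fibersum (insert i (Finset.range c))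
      rw [Finset.sum_insert (by simp; omega), hlamc] at h1
      omega
    -- measure zero: prefix sums all agree
    have hzero : ∀ k ∈ Finset.range c,
        (∑ i ∈ Finset.range k, lam i) - (∑ i ∈ Finset.range k, mu i) = 0 := by
      intro k hk
      have := Finset.sum_eq_zero_iff.mp (Nat.le_zero.mp hmeas) k hk
      exact this
    have hS : ∀ k, k ≤ c → ∑ i ∈ Finset.range k, lam i = ∑ i ∈ Finset.range k, mu i := by
      intro k hk
      rcases lt_or_eq_of_le hk with h | h
      · have h1 := hzero k (Finset.mem_range.mpr h)
        have h2 := hdom k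
        omega
      · rw [h, hlamc, hmusum]
    have heq : ∀ i, lam i = mu i := by
      intro i
      by_cases hi : i < c
      · have h1 := hS i (le_of_lt hi)
        have h2 := hS (i + 1) hi
        rw [Finset.sum_range_succ, Finset.sum_range_succ] at h2
        omega
      · rw [hlam0 i (by omega), hmu0 i (by omega)]
    exact ⟨π, fun i => (hcard i).trans (heq i), hind⟩
  | succ D ih =>
    intro lam hdom hmeas ⟨π, hcard, hind⟩
    set c := Fintype.card α with hc
    by_cases hle : (∑ k ∈ Finset.range c,
        ((∑ i ∈ Finset.range k, lam i) - ∑ i ∈ Finset.range k, mu i)) ≤ D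
    · exact ih lam hdom hle ⟨π, hcard, hind⟩
    -- the measure is positive
    have fibersum : ∀ s : Finset ℕ, ∑ i ∈ s, lam i ≤ c := by
      intro s
      have hdisj : ∀ i ∈ s, ∀ j ∈ s, i ≠ j →
          Disjoint (Finset.univ.filter (fun x => π x = i))
            (Finset.univ.filter (fun x => π x = j)) := by
        intro i _ j _ hij
        rw [Finset.disjoint_left]
        intro x hx hx'
        simp only [Finset.mem_filter] at hx hx'
        exact hij (hx.2 ▸ hx'.2 ▸ rfl)
      calc ∑ i ∈ s, lam i
          = ∑ i ∈ s, (Finset.univ.filter (fun x => π x = i)).card := by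
            simp [hcard]
        _ = (s.biUnion (fun i => Finset.univ.filter (fun x => π x = i))).card :=
            (Finset.card_biUnion hdisj).symm
        _ ≤ (Finset.univ : Finset α).card := Finset.card_le_univ _
        _ = c := Finset.card_univ
    have hlamc : ∑ i ∈ Finset.range c, lam i = c := by
      have h1 := hdom c
      have h2 := fibersum (Finset.range c)
      omega
    have hlam0 : ∀ i, c ≤ i → lam i = 0 := by
      intro i hi
      have h1 := fibersum (insert i (Finset.range c))
      rw [Finset.sum_insert (by simp; omega), hlamc] at h1
      omega
    -- prefix sums agree from c onwards
    have hSgec : ∀ k, c ≤ k → ∑ i ∈ Finset.range k, lam i = ∑ i ∈ Finset.range k, mu i := by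
      intro k hk
      have h1 : ∑ i ∈ Finset.range k, lam i = ∑ i ∈ Finset.range c, lam i := by
        rw [← Finset.sum_range_add_sum_Ico lam hk]
        rw [Finset.sum_eq_zero (fun i hi => hlam0 i (Finset.mem_Ico.mp hi).1)]
        omega
      have h2 : ∑ i ∈ Finset.range k, mu i = ∑ i ∈ Finset.range c, mu i := by
        rw [← Finset.sum_range_add_sum_Ico mu hk]
        rw [Finset.sum_eq_zero (fun i hi => hmu0 i (Finset.mem_Ico.mp hi).1)]
        omega
      rw [h1, h2, hlamc, hmusum]
    have hex : ∃ k, ∑ i ∈ Finset.range k, mu i < ∑ i ∈ Finset.range k, lam i := by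
      by_contra hcon
      push_neg at hcon
      apply hle
      have : ∑ k ∈ Finset.range c,
          ((∑ i ∈ Finset.range k, lam i) - ∑ i ∈ Finset.range k, mu i) = 0 :=
        Finset.sum_eq_zero (fun k _ => by have h1 := hcon k; omega)
      omega
    set a := Nat.find hex with hadef
    have ha : ∑ i ∈ Finset.range a, mu i < ∑ i ∈ Finset.range a, lam i := Nat.find_spec hex
    have haeq : ∀ k, k < a →
        ∑ i ∈ Finset.range k, lam i = ∑ i ∈ Finset.range k, mu i := by
      intro k hk
      have h1 := Nat.find_min hex hk
      have h2 := hdom k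
      omega
    have hapos : 1 ≤ a := by
      rcases Nat.eq_zero_or_pos a with h | h
      · rw [h] at ha; simp at ha
      · exact h
    have haltc : a < c := by
      by_contra hcon
      push_neg at hcon
      have := hSgec a hcon
      omega
    have hexb : ∃ m, a ≤ m ∧
        ∑ i ∈ Finset.range m, lam i = ∑ i ∈ Finset.range m, mu i :=
      ⟨c, le_of_lt haltc, hSgec c le_rfl⟩
    set b := Nat.find hexb with hbdef
    have hb := Nat.find_spec hexb
    rw [← hbdef] at hb
    have hblec : b ≤ c := Nat.find_min' hexb ⟨le_of_lt haltc, hSgec c le_rfl⟩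
    have hbstrict : ∀ k, a ≤ k → k < b →
        ∑ i ∈ Finset.range k, mu i < ∑ i ∈ Finset.range k, lam i := by
      intro k h1 h2
      have h3 := Nat.find_min hexb h2
      push_neg at h3
      have h4 := hdom k
      rcases lt_or_eq_of_le h4 with h | h
      · exact h
      · exact absurd h.symm (h3 h1)
    have haltb : a < b := by
      rcases lt_or_eq_of_le hb.1 with h | h
      · exact h
      · rw [← h] at hb; omega
    set p := a - 1 with hpdef
    set q := b - 1 with hqdef
    have hap : a = p + 1 := by omega
    have hbq : b = q + 1 := by omega
    have hpltq : p < q := by omega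
    -- lam p ≥ mu p + 1
    have hSp : ∑ i ∈ Finset.range p, lam i = ∑ i ∈ Finset.range p, mu i :=
      haeq p (by omega)
    have hSa := ha
    rw [hap, Finset.sum_range_succ, Finset.sum_range_succ] at hSa
    have hlamp : mu p + 1 ≤ lam p := by omega
    -- lam q + 1 ≤ mu q
    have hSb := hb.2
    rw [hbq, Finset.sum_range_succ, Finset.sum_range_succ] at hSb
    have hSq := hbstrict q (by omega) (by omega)
    have hlamq : lam q + 1 ≤ mu q := by omega
    have hgap : lam q + 2 ≤ lam p := by
      have := hmu (le_of_lt hpltq)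
      omega
    have hpne : p ≠ q := Nat.ne_of_lt hpltq
    -- the exchange
    have hltcard : ((Finset.univ.filter (fun x => π x = q) : Finset α) : Set α).encard <
        ((Finset.univ.filter (fun x => π x = p) : Finset α) : Set α).encard := by
      rw [Set.encard_coe_eq_coe_finsetCard, Set.encard_coe_eq_coe_finsetCard,
        hcard, hcard]
      exact_mod_cast (by omega : lam q < lam p)
    obtain ⟨e, he, hins⟩ := (hind q).augment (hind p) hltcard
    have heA : π e = p := by
      have := he.1
      simp only [Finset.coe_filter, Set.mem_setOf_eq] at this
      exact this.2
    have heB : e ∉ Finset.univ.filter (fun x => π x = q) := by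
      simp [heA, hpne]
    have heAmem : e ∈ Finset.univ.filter (fun x => π x = p) := by simp [heA]
    set π' : α → ℕ := fun x => if x = e then q else π x with hπ'def
    set lam' : ℕ → ℕ := fun i =>
      if i = p then lam p - 1 else if i = q then lam q + 1 else lam i with hlam'def
    -- fibres of π'
    have hfibp : Finset.univ.filter (fun x => π' x = p)
        = (Finset.univ.filter (fun x => π x = p)).erase e := by
      ext x
      simp only [Finset.mem_filter, Finset.mem_erase, Finset.mem_univ, true_and, hπ'def]
      by_cases hx : x = e
      · subst hx; simp [hpne.symm, heA]
      · simp [hx]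
    have hfibq : Finset.univ.filter (fun x => π' x = q)
        = insert e (Finset.univ.filter (fun x => π x = q)) := by
      ext x
      simp only [Finset.mem_filter, Finset.mem_insert, Finset.mem_univ, true_and, hπ'def]
      by_cases hx : x = e
      · subst hx; simp
      · simp [hx]
    have hfibo : ∀ i, i ≠ p → i ≠ q → Finset.univ.filter (fun x => π' x = i)
        = Finset.univ.filter (fun x => π x = i) := by
      intro i hip hiq
      ext x
      simp only [Finset.mem_filter, Finset.mem_univ, true_and, hπ'def]
      by_cases hx : x = e
      · subst hx; simp [heA, Ne.symm hip, Ne.symm hiq]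
      · simp [hx]
    have hcard' : ∀ i, (Finset.univ.filter (fun x => π' x = i)).card = lam' i := by
      intro i
      by_cases hip : i = p
      · subst hip
        rw [hfibp, Finset.card_erase_of_mem heAmem, hcard]
        simp [hlam'def]
      · by_cases hiq : i = q
        · subst hiq
          rw [hfibq, Finset.card_insert_of_notMem heB, hcard]
          simp [hlam'def, hpne.symm]
        · rw [hfibo i hip hiq, hcard]
          simp [hlam'def, hip, hiq]
    have hind' : ∀ i, M.Indep ↑(Finset.univ.filter (fun x => π' x = i)) := by
      intro i
      by_cases hip : i = p
      · subst hip
        rw [hfibp]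
        exact (hind p).subset (by exact_mod_cast Finset.coe_subset.mpr (Finset.erase_subset _ _))
      · by_cases hiq : i = q
        · subst hiq
          rw [hfibq, Finset.coe_insert]
          exact hins
        · rw [hfibo i hip hiq]; exact hind i
    -- key prefix-sum identity
    have hfg : ∀ i, lam' i + (if p = i then 1 else 0) = lam i + (if q = i then 1 else 0) := by
      intro i
      rcases eq_or_ne i p with rfl | hip
      · simp only [hlam'def]
        split_ifs <;> omega
      · rcases eq_or_ne i q with rfl | hiq
        · simp only [hlam'def]
          split_ifs <;> omega
        · simp only [hlam'def]
          split_ifs <;> omega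
    have hkey : ∀ k, (∑ i ∈ Finset.range k, lam' i) + (if p < k then 1 else 0)
        = (∑ i ∈ Finset.range k, lam i) + (if q < k then 1 else 0) := by
      intro k
      have h1 : ∑ i ∈ Finset.range k, (lam' i + if p = i then 1 else 0)
          = ∑ i ∈ Finset.range k, (lam i + if q = i then 1 else 0) :=
        Finset.sum_congr rfl (fun i _ => hfg i)
      rw [Finset.sum_add_distrib, Finset.sum_add_distrib, Finset.sum_ite_eq,
        Finset.sum_ite_eq] at h1
      simp only [Finset.mem_range] at h1
      exact h1
    have hdom' : ∀ k, ∑ i ∈ Finset.range k, mu i ≤ ∑ i ∈ Finset.range k, lam' i := by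
      intro k
      have h1 := hkey k
      have h2 := hdom k
      by_cases hck : a ≤ k ∧ k < b
      · have h3 := hbstrict k hck.1 hck.2
        split_ifs at h1 <;> omega
      · split_ifs at h1 <;> omega
    have hmeas' : (∑ k ∈ Finset.range c,
        ((∑ i ∈ Finset.range k, lam' i) - ∑ i ∈ Finset.range k, mu i)) ≤ D := by
      have hlt : (∑ k ∈ Finset.range c,
          ((∑ i ∈ Finset.range k, lam' i) - ∑ i ∈ Finset.range k, mu i))
          < ∑ k ∈ Finset.range c,
          ((∑ i ∈ Finset.range k, lam i) - ∑ i ∈ Finset.range k, mu i) := by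
        apply Finset.sum_lt_sum
        · intro k _
          have h1 := hkey k
          split_ifs at h1 <;> omega
        · refine ⟨a, Finset.mem_range.mpr haltc, ?_⟩
          have h1 := hkey a
          have h2 : p < a := by omega
          have h3 : ¬ q < a := by omega
          rw [if_pos h2, if_neg h3] at h1
          omega
      omega
    exact ih lam' hdom' hmeas' ⟨π', hcard', hind'⟩

/-- If a matroid `M` on ground set `E` admits a partition of `E` into independent sets
of sizes `λ₁ ≥ λ₂ ≥ ...`, and `μ` is a partition of `|E|` with `μ ≤ λ` in dominance
order, then `E` also admits a partition into independent sets whose sizes are the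
parts of `μ`.  Partitions of the ground set are encoded by labelling functions
`π : α → ℕ` whose fibres are the blocks. -/
theorem partition_into_independent_of_dominated {α : Type*} [Fintype α] [DecidableEq α]
    (M : Matroid α) (hE : M.E = Set.univ)
    (lam mu : ℕ → ℕ) (hlam : Antitone lam) (hmu : Antitone mu)
    (hmusum : ∑ i ∈ Finset.range (Fintype.card α), mu i = Fintype.card α)
    (hmu0 : ∀ i, Fintype.card α ≤ i → mu i = 0)
    (hdom : ∀ k, ∑ i ∈ Finset.range k, mu i ≤ ∑ i ∈ Finset.range k, lam i)
    (hpart : ∃ π : α → ℕ,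
      (∀ i, (Finset.univ.filter (fun x => π x = i)).card = lam i) ∧
      ∀ i, M.Indep ↑(Finset.univ.filter (fun x => π x = i))) :
    ∃ π : α → ℕ,
      (∀ i, (Finset.univ.filter (fun x => π x = i)).card = mu i) ∧
      ∀ i, M.Indep ↑(Finset.univ.filter (fun x => π x = i)) := by
  exact aux_partition_dom M mu hmu hmusum hmu0
    (∑ k ∈ Finset.range (Fintype.card α),
      ((∑ i ∈ Finset.range k, lam i) - ∑ i ∈ Finset.range k, mu i))
    lam hdom le_rfl hpart
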